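/- For every odd prime p, p does not divide the sum of the first p nonzero Fibonacci numbers, i.e., p ∤ ∑_{i=1}^p F_i. -/

import Mathlib

lemma fib_matrix_pow (p : ℕ) : ∀ n : ℕ,
    (!![1,1;1,0] : Matrix (Fin 2) (Fin 2) (ZMod p)) ^ (n+1) =
      !![(Nat.fib (n+2) : ZMod p), (Nat.fib (n+1) : ZMod p);
         (Nat.fib (n+1) : ZMod p), (Nat.fib n : ZMod p)] := by
  intro n
  induction n with
  | zero => norm_num
  | succ k ih =>
    rw [pow_succ, ih, Matrix.mul_fin_two]
    ext i j
    fin_cases i <;> fin_cases j <;>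
      push_cast [Nat.fib_add_two] <;> ring

theorem stmt_3 (p : ℕ) (hp : p.Prime) (hodd : Odd p) :
    ¬ p ∣ ∑ i ∈ Finset.Icc 1 p, Nat.fib i := by
  by_cases h5 : p = 5
  · subst h5; decide
  intro h
  haveI : Fact p.Prime := ⟨hp⟩
  obtain ⟨k, rfl⟩ : ∃ k, p = k + 1 := ⟨p - 1, (Nat.succ_pred_eq_of_pos hp.pos).symm⟩
  set p := k + 1
  -- sum identity : fib (p+2) = S + 1
  have hsum : Nat.fib (p + 2) = (∑ i ∈ Finset.Icc 1 p, Nat.fib i) + 1 := by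
    rw [Nat.fib_succ_eq_succ_sum (p+1)]
    congr 1
    rw [← Finset.Ico_add_one_right_eq_Icc, Finset.range_eq_Ico,
      Finset.sum_eq_sum_Ico_succ_bot (by omega : 0 < p + 1)]
    simp
  -- consequences in ZMod p
  have hM := fib_matrix_pow p k
  have htr := ZMod.trace_pow_card (p := p) (!![1,1;1,0] : Matrix (Fin 2) (Fin 2) (ZMod p))
  rw [hM] at htr
  have hdet : ((!![1,1;1,0] : Matrix (Fin 2) (Fin 2) (ZMod p)) ^ (k+1)).det = (-1) ^ (k+1) := by
    rw [Matrix.det_pow, Matrix.det_fin_two_of]; norm_num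
  rw [hM, Matrix.det_fin_two_of, hodd.neg_one_pow] at hdet
  simp [Matrix.trace_fin_two_of] at htr
  set a : ZMod p := (Nat.fib (k+1) : ZMod p) with ha
  set b : ZMod p := (Nat.fib k : ZMod p) with hb
  have e1 : a + b + b = 1 := by
    have : (Nat.fib (k+2) : ZMod p) = a + b := by
      rw [ha, hb, Nat.fib_add_two]; push_cast; ring
    rw [this] at htr
    linear_combination htr
  have e2 : (a + b) * b - a * a = -1 := by
    have h2 : (Nat.fib (k+2) : ZMod p) = a + b := by
      rw [ha, hb, Nat.fib_add_two]; push_cast; ring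
    rw [h2] at hdet
    linear_combination hdet
  have e3 : a + b + a = 1 := by
    have hz : ((∑ i ∈ Finset.Icc 1 p, Nat.fib i : ℕ) : ZMod p) = 0 :=
      (ZMod.natCast_eq_zero_iff _ _).mpr h
    have : (Nat.fib (p+2) : ZMod p) = 1 := by
      rw [hsum]; push_cast [hz]; ring
    have h3 : (Nat.fib (p+2) : ZMod p) = a + b + a := by
      show (Nat.fib (k+3) : ZMod p) = a + b + a
      rw [show k + 3 = (k+1) + 2 from rfl, Nat.fib_add_two, Nat.fib_add_two]
      push_cast; ring
    rw [h3] at this; exact this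
  have hab : a = b := by linear_combination e3 - e1
  have h10 : (10 : ZMod p) = 0 := by
    rw [hab] at e1 e2
    linear_combination (-(1 + 3*b)) * e1 + 9 * e2
  have hdvd : p ∣ 10 := by
    have := (ZMod.natCast_eq_zero_iff 10 p).mp (by exact_mod_cast h10)
    exact this
  have hle : p ≤ 10 := Nat.le_of_dvd (by norm_num) hdvd
  interval_cases p
  all_goals first
    | exact absurd hp (by decide)
    | exact absurd (Nat.odd_iff.mp hodd) (by decide)
    | exact absurd hdvd (by decide)
    | exact h5 rfl
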